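/- Let Φ be a non-uniform random k-SAT formula on n variables with m clauses and suppose q_max = o(1) as n → ∞. Then: (i) if m = Θ(q_max^{-1}), the probability that Φ is unsatisfiable is Ω(1); and (ii) if m = ω(q_max^{-1}), the probability that Φ is unsatisfiable is 1 − o(1). -/

import Mathlib

open Finset Filter Asymptotics

open scoped Classical

/-- The probability of drawing a given ordered k-clause (a tuple of `k` literals over
pairwise distinct variables); an unordered k-clause over a variable set `J` then has total
probability `(∏_{j∈J} pⱼ) / (2^k · ∑_{|J'|=k} ∏_{j∈J'} pⱼ)`. -/
noncomputable def clauseProbK (n k : ℕ) (p : ℕ → ℝ) (c : Fin k → Fin n × Bool) : ℝ :=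
  if Function.Injective fun i => (c i).1 then
    (∏ i, p ((c i).1 : ℕ)) /
      (2 ^ k * (Nat.factorial k) *
        ∑ J ∈ Finset.powersetCard k (Finset.range n), ∏ j ∈ J, p j)
  else 0

/-- The probability of drawing a given k-CNF formula: `m` clauses drawn independently. -/
noncomputable def formulaProbK (n m k : ℕ) (p : ℕ → ℝ)
    (Φ : Fin m → Fin k → Fin n × Bool) : ℝ :=
  ∏ j, clauseProbK n k p (Φ j)

/-- Satisfiability of a k-CNF formula: a literal `(x, b)` is satisfied by `a` iff `a x = b`. -/
def SatK {n m k : ℕ} (Φ : Fin m → Fin k → Fin n × Bool) : Prop :=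
  ∃ a : Fin n → Bool, ∀ j, ∃ i, a (Φ j i).1 = (Φ j i).2

/-- The probability that a non-uniform random k-SAT formula is unsatisfiable. -/
noncomputable def probUnsatK (n m k : ℕ) (p : ℕ → ℝ) : ℝ :=
  ∑ Φ : Fin m → Fin k → Fin n × Bool,
    if ¬ SatK Φ then formulaProbK n m k p Φ else 0

/-- The maximum clause probability: for a decreasingly sorted distribution `p` this is the
probability of a clause over the `k` most probable variables,
`q_max = (∏_{j<k} pⱼ) / (2^k · ∑_{|J'|=k} ∏_{j∈J'} pⱼ)`. -/
noncomputable def qmaxK (n k : ℕ) (p : ℕ → ℝ) : ℝ :=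
  (∏ j ∈ Finset.range k, p j) /
    (2 ^ k * ∑ J ∈ Finset.powersetCard k (Finset.range n), ∏ j ∈ J, p j)

/-- `p n` is a probability vector on `n` variables (indexed `0,…,n-1`), sorted decreasingly,
with all entries positive. -/
def ProbEnsemble (p : ℕ → ℕ → ℝ) : Prop :=
  ∀ n, 1 ≤ n →
    (∑ i ∈ Finset.range n, p n i = 1) ∧
    (∀ i j, i ≤ j → j < n → p n j ≤ p n i) ∧
    (∀ i, i < n → 0 < p n i)

lemma card_fiber (n k : ℕ) (J : Finset ℕ) (hJ : J ∈ Finset.powersetCard k (Finset.range n)) :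
    (Finset.univ.filter (fun f : Fin k → Fin n =>
      Function.Injective f ∧ Finset.image (fun i => ((f i : ℕ))) Finset.univ = J)).card
      = Nat.factorial k := by
  rw [Finset.mem_powersetCard] at hJ
  obtain ⟨hJsub, hJcard⟩ := hJ
  rw [← Fintype.card_subtype]
  have e : { f : Fin k → Fin n // Function.Injective f ∧
      Finset.image (fun i => ((f i : ℕ))) Finset.univ = J } ≃ (Fin k ↪ {x // x ∈ J}) :=
  { toFun := fun f => ⟨fun i => ⟨((f : Fin k → Fin n) i : ℕ), by
      have h := Finset.mem_image_of_mem (fun i => (((f : Fin k → Fin n) i : ℕ))) (Finset.mem_univ i)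
      rwa [f.2.2] at h⟩, by
      intro a b hab
      exact f.2.1 (Fin.val_injective (by simpa using congrArg Subtype.val hab))⟩
    invFun := fun e => ⟨fun i => ⟨(e i : ℕ), Finset.mem_range.mp (hJsub (e i).2)⟩, by
      constructor
      · intro a b hab
        exact e.injective (Subtype.ext (by simpa using congrArg Fin.val hab))
      · apply Finset.eq_of_subset_of_card_le
        · intro x hx
          simp only [Finset.mem_image] at hx
          obtain ⟨i, _, rfl⟩ := hx
          exact (e i).2
        · rw [hJcard]
          rw [show (fun i : Fin k => (((⟨(e i : ℕ), Finset.mem_range.mp (hJsub (e i).2)⟩ : Fin n)) : ℕ)) = fun i : Fin k => ((e i : ℕ)) from rfl]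
          rw [Finset.card_image_of_injective _ (fun a b hab => e.injective (Subtype.ext hab))]
          simp⟩
    left_inv := fun f => by ext i; simp; rfl
    right_inv := fun e => by ext i; simp }
  rw [Fintype.card_congr e, Fintype.card_embedding_eq, Fintype.card_coe, hJcard,
    Fintype.card_fin, Nat.descFactorial_self]

lemma sum_inj_eq (n k : ℕ) (g : ℕ → ℝ) :
    ∑ f : Fin k → Fin n, (if Function.Injective f then ∏ i, g ((f i : ℕ)) else 0)
      = (Nat.factorial k) * ∑ J ∈ Finset.powersetCard k (Finset.range n), ∏ j ∈ J, g j := by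
  rw [← Finset.sum_filter]
  have hmap : ∀ f ∈ Finset.univ.filter (fun f : Fin k → Fin n => Function.Injective f),
      Finset.image (fun i => ((f i : ℕ))) Finset.univ ∈ Finset.powersetCard k (Finset.range n) := by
    intro f hf
    rw [Finset.mem_filter] at hf
    rw [Finset.mem_powersetCard]
    constructor
    · intro x hx
      simp only [Finset.mem_image] at hx
      obtain ⟨i, _, rfl⟩ := hx
      exact Finset.mem_range.mpr (f i).2
    · rw [show (fun i : Fin k => ((f i : ℕ))) = Fin.val ∘ f from rfl,
        Finset.card_image_of_injective _ (Fin.val_injective.comp hf.2), Finset.card_univ,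
        Fintype.card_fin]
  rw [← Finset.sum_fiberwise_of_maps_to hmap, Finset.mul_sum]
  apply Finset.sum_congr rfl
  intro J hJ
  have : ∀ f ∈ (Finset.univ.filter (fun f : Fin k → Fin n => Function.Injective f)).filter
      (fun f => Finset.image (fun i => ((f i : ℕ))) Finset.univ = J),
      (∏ i, g ((f i : ℕ))) = ∏ j ∈ J, g j := by
    intro f hf
    simp only [Finset.mem_filter] at hf
    rw [← hf.2, Finset.prod_image]
    intro a _ b _ hab
    exact hf.1.2 (Fin.val_injective hab)
  rw [Finset.sum_congr rfl this, Finset.sum_const, Finset.filter_filter, card_fiber n k J hJ,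
    nsmul_eq_mul]

lemma sigma_pos (n k : ℕ) (hkn : k ≤ n) (p : ℕ → ℝ) (hp : ∀ i, i < n → 0 < p i) :
    0 < ∑ J ∈ Finset.powersetCard k (Finset.range n), ∏ j ∈ J, p j := by
  apply Finset.sum_pos
  · intro J hJ
    rw [Finset.mem_powersetCard] at hJ
    exact Finset.prod_pos fun j hj => hp j (Finset.mem_range.mp (hJ.1 hj))
  · refine ⟨Finset.range k, ?_⟩
    rw [Finset.mem_powersetCard]
    exact ⟨Finset.range_subset_range.mpr hkn, Finset.card_range k⟩

lemma sum_clauseProbK (n k : ℕ) (hkn : k ≤ n) (p : ℕ → ℝ) (hp : ∀ i, i < n → 0 < p i) :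
    ∑ c : Fin k → Fin n × Bool, clauseProbK n k p c = 1 := by
  set D := (2:ℝ) ^ k * (Nat.factorial k) *
      ∑ J ∈ Finset.powersetCard k (Finset.range n), ∏ j ∈ J, p j with hD
  have hDpos : 0 < D := by
    apply mul_pos (mul_pos (by positivity) (by positivity))
    exact sigma_pos n k hkn p hp
  have key : ∑ c : Fin k → Fin n × Bool, clauseProbK n k p c
      = ∑ f : Fin k → Fin n, (2:ℝ)^k * ((if Function.Injective f then ∏ i, p ((f i : ℕ)) else 0) / D) := by
    rw [← Equiv.sum_comp (Equiv.arrowProdEquivProdArrow (Fin k) (fun _ => Fin n) (fun _ => Bool)).symm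
      (clauseProbK n k p)]
    rw [Fintype.sum_prod_type]
    apply Finset.sum_congr rfl
    intro f _
    have : ∀ b : Fin k → Bool,
        clauseProbK n k p ((Equiv.arrowProdEquivProdArrow (Fin k) (fun _ => Fin n) (fun _ => Bool)).symm (f, b))
          = (if Function.Injective f then ∏ i, p ((f i : ℕ)) else 0) / D := by
      intro b
      simp only [Equiv.arrowProdEquivProdArrow, Equiv.coe_fn_symm_mk, clauseProbK]
      split_ifs with h
      · exact (if_pos h).trans rfl
      · exact (if_neg h).trans (zero_div D).symm
    rw [Finset.sum_congr rfl fun b _ => this b, Finset.sum_const, Finset.card_univ]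
    simp [Fintype.card_fun, mul_comm, nsmul_eq_mul]
  rw [key]
  simp only [← mul_div_assoc]
  rw [← Finset.sum_div, ← Finset.mul_sum, sum_inj_eq n k p]
  rw [hD]
  field_simp
  exact mul_inv_cancel₀ (sigma_pos n k hkn p hp).ne'


lemma sum_pi_prod {N : ℕ} {C : Type*} [Fintype C] [DecidableEq C] (F : Fin N → C → ℝ) :
    ∑ ψ : Fin N → C, ∏ b, F b (ψ b) = ∏ b, ∑ c, F b c := by
  rw [Finset.prod_univ_sum]
  rw [Fintype.piFinset_univ]

lemma miss_sum {t : ℕ} {C : Type*} [Fintype C] [DecidableEq C] (w : C → ℝ) (hs : ∑ c, w c = 1) (c₀ : C) :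
    ∑ φ : Fin t → C, (if (∀ r, φ r ≠ c₀) then ∏ r, w (φ r) else 0) = (1 - w c₀) ^ t := by
  have h1 : ∀ φ : Fin t → C, (if (∀ r, φ r ≠ c₀) then ∏ r, w (φ r) else 0)
      = ∏ r, (if φ r ≠ c₀ then w (φ r) else 0) := by
    intro φ
    by_cases h : ∀ r, φ r ≠ c₀
    · rw [if_pos h]
      exact (Finset.prod_congr rfl fun r _ => (if_pos (h r))).symm
    · rw [if_neg h]
      push_neg at h
      obtain ⟨r, hr⟩ := h
      exact (Finset.prod_eq_zero (Finset.mem_univ r) (by simp [hr])).symm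
  rw [Finset.sum_congr rfl fun φ _ => h1 φ, sum_pi_prod (fun (_ : Fin t) (c : C) => if c ≠ c₀ then w c else 0)]
  have h2 : ∀ r : Fin t, (∑ c, (if c ≠ c₀ then w c else 0)) = 1 - w c₀ := by
    intro r
    have : ∀ c : C, (if c ≠ c₀ then w c else 0) = w c - (if c = c₀ then w c else 0) := by
      intro c; by_cases h : c = c₀ <;> simp [h]
    rw [Finset.sum_congr rfl fun c _ => this c, Finset.sum_sub_distrib, hs,
      Finset.sum_ite_eq' Finset.univ c₀ w, if_pos (Finset.mem_univ c₀)]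
  rw [Finset.prod_congr rfl fun r _ => h2 r, Finset.prod_const, Finset.card_univ,
    Fintype.card_fin]

lemma hit_sum {t : ℕ} {C : Type*} [Fintype C] [DecidableEq C] (w : C → ℝ) (hs : ∑ c, w c = 1) (c₀ : C) :
    ∑ φ : Fin t → C, (if (∃ r, φ r = c₀) then ∏ r, w (φ r) else 0) = 1 - (1 - w c₀) ^ t := by
  have key : ∀ φ : Fin t → C, (if (∃ r, φ r = c₀) then ∏ r, w (φ r) else 0)
      = (∏ r, w (φ r)) - (if (∀ r, φ r ≠ c₀) then ∏ r, w (φ r) else 0) := by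
    intro φ
    by_cases h : ∃ r, φ r = c₀
    · rw [if_pos h, if_neg (by push_neg; exact h), sub_zero]
    · rw [if_neg h, if_pos (by push_neg at h; exact h), sub_self]
  rw [Finset.sum_congr rfl fun φ _ => key φ, Finset.sum_sub_distrib, miss_sum w hs c₀]
  have : ∑ φ : Fin t → C, ∏ r, w (φ r) = 1 := by
    rw [sum_pi_prod fun _ c => w c]
    simp [hs]
  rw [this]

lemma block_sum_eq (N t : ℕ) {C : Type*} [Fintype C] [DecidableEq C] (w : C → ℝ) (hs : ∑ c, w c = 1)
    (T : Fin N → C) :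
    ∑ ψ : Fin N → Fin t → C,
      (if (∀ b, ∃ r, ψ b r = T b) then ∏ b, ∏ r, w (ψ b r) else 0)
      = ∏ b, (1 - (1 - w (T b)) ^ t) := by
  have h1 : ∀ ψ : Fin N → Fin t → C, (if (∀ b, ∃ r, ψ b r = T b) then ∏ b, ∏ r, w (ψ b r) else 0)
      = ∏ b, (if (∃ r, ψ b r = T b) then ∏ r, w (ψ b r) else 0) := by
    intro ψ
    by_cases h : ∀ b, ∃ r, ψ b r = T b
    · rw [if_pos h]
      exact (Finset.prod_congr rfl fun b _ => (if_pos (h b))).symm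
    · rw [if_neg h]
      push_neg at h
      obtain ⟨b, hb⟩ := h
      refine (Finset.prod_eq_zero (Finset.mem_univ b) ?_).symm
      rw [if_neg]
      push_neg
      exact hb
  rw [Finset.sum_congr rfl fun ψ _ => h1 ψ,
    sum_pi_prod (C := Fin t → C) (fun (b : Fin N) (φ : Fin t → C) => (if (∃ r, φ r = T b) then ∏ r, w (φ r) else 0))]
  exact Finset.prod_congr rfl fun b _ => hit_sum w hs (T b)

lemma clauseProbK_nonneg (n k : ℕ) (hkn : k ≤ n) (p : ℕ → ℝ) (hp : ∀ i, i < n → 0 < p i)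
    (c : Fin k → Fin n × Bool) : 0 ≤ clauseProbK n k p c := by
  unfold clauseProbK
  split_ifs
  · apply div_nonneg
    · exact Finset.prod_nonneg fun i _ => (hp _ (c i).1.2).le
    · have := sigma_pos n k hkn p hp
      positivity
  · exact le_rfl

lemma probUnsatK_le_one (n m k : ℕ) (hkn : k ≤ n) (p : ℕ → ℝ) (hp : ∀ i, i < n → 0 < p i) :
    probUnsatK n m k p ≤ 1 := by
  unfold probUnsatK
  have h1 : ∀ Φ : Fin m → Fin k → Fin n × Bool,
      (if ¬ SatK Φ then formulaProbK n m k p Φ else 0) ≤ formulaProbK n m k p Φ := by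
    intro Φ
    split_ifs
    all_goals first
      | exact le_rfl
      | exact Finset.prod_nonneg fun j _ => clauseProbK_nonneg n k hkn p hp (Φ j)
  calc ∑ Φ : Fin m → Fin k → Fin n × Bool, (if ¬ SatK Φ then formulaProbK n m k p Φ else 0)
      ≤ ∑ Φ : Fin m → Fin k → Fin n × Bool, formulaProbK n m k p Φ := Finset.sum_le_sum fun Φ _ => h1 Φ
    _ = 1 := by
        unfold formulaProbK
        rw [sum_pi_prod (fun (_ : Fin m) c => clauseProbK n k p c)]
        rw [Finset.prod_congr rfl fun j _ => sum_clauseProbK n k hkn p hp]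
        simp

lemma unsat_lower (n m k : ℕ) (hkn : k ≤ n) (p : ℕ → ℝ) (hp : ∀ i, i < n → 0 < p i) :
    (1 - (1 - qmaxK n k p / Nat.factorial k) ^ (m / 2 ^ k)) ^ (2 ^ k)
      ≤ probUnsatK n m k p := by
  classical
  set w := clauseProbK n k p with hw
  set N := 2 ^ k
  set t := m / N with ht
  set s := m % N with hs'
  have hβcard : Fintype.card (Fin k → Bool) = N := by simp [N]
  let β : (Fin k → Bool) ≃ Fin N := Fintype.equivFinOfCardEq hβcard
  let T : Fin N → (Fin k → Fin n × Bool) := fun b i => (⟨(i : ℕ), lt_of_lt_of_le i.2 hkn⟩, β.symm b i)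
  -- value of w (T b)
  have hSig := sigma_pos n k hkn p hp
  have hwT : ∀ b, w (T b) = qmaxK n k p / Nat.factorial k := by
    intro b
    have hinj : Function.Injective fun i : Fin k => (T b i).1 := by
      intro a b' hab
      exact Fin.val_injective (by simpa using congrArg Fin.val hab)
    rw [hw]
    unfold clauseProbK
    rw [if_pos hinj]
    unfold qmaxK
    have hprod : (∏ i : Fin k, p (((T b i).1 : ℕ))) = ∏ j ∈ Finset.range k, p j := by
      simpa using (Fin.prod_univ_eq_prod_range (fun j => p j) k)
    rw [hprod]
    have h2 : (0:ℝ) < 2 ^ k := by positivity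
    have h3 : (0:ℝ) < (Nat.factorial k : ℝ) := by positivity
    field_simp
  have hsum := sum_clauseProbK n k hkn p hp
  -- the equivalence
  have hm : N * t + s = m := Nat.div_add_mod m N
  let e : Fin m ≃ (Fin N × Fin t) ⊕ Fin s :=
    (finCongr hm.symm).trans (finSumFinEquiv.symm.trans
      (Equiv.sumCongr finProdFinEquiv.symm (Equiv.refl (Fin s))))
  -- the event
  let G : (Fin m → (Fin k → Fin n × Bool)) → Prop := fun Φ => ∀ b : Fin N, ∃ r : Fin t, Φ (e.symm (Sum.inl (b, r))) = T b
  -- unsat implication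
  have hGunsat : ∀ Φ : Fin m → (Fin k → Fin n × Bool), G Φ → ¬ SatK Φ := by
    intro Φ hG hSat
    obtain ⟨a, ha⟩ := hSat
    set bb : Fin k → Bool := fun i => ! a ⟨(i : ℕ), lt_of_lt_of_le i.2 hkn⟩ with hbb
    obtain ⟨r, hr⟩ := hG (β bb)
    obtain ⟨i, hi⟩ := ha (e.symm (Sum.inl (β bb, r)))
    rw [hr] at hi
    have : (T (β bb) i).2 = ! a (T (β bb) i).1 := by
      simp only [T, hbb]
      simp
    rw [this] at hi
    simp at hi
  -- lower bound by the event sum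
  have step1 : ∑ Φ : Fin m → (Fin k → Fin n × Bool), (if G Φ then formulaProbK n m k p Φ else 0)
      ≤ probUnsatK n m k p := by
    unfold probUnsatK
    apply Finset.sum_le_sum
    intro Φ _
    by_cases h : G Φ
    · rw [if_pos h, if_pos (hGunsat Φ h)]
    · rw [if_neg h]
      split_ifs
      all_goals first
        | exact le_rfl
        | exact Finset.prod_nonneg fun j _ => clauseProbK_nonneg n k hkn p hp (Φ j)
  -- compute the event sum
  have step2 : ∑ Φ : Fin m → (Fin k → Fin n × Bool), (if G Φ then formulaProbK n m k p Φ else 0)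
      = (1 - (1 - qmaxK n k p / Nat.factorial k) ^ t) ^ N := by
    have e1 : ∑ Φ : Fin m → (Fin k → Fin n × Bool), (if G Φ then formulaProbK n m k p Φ else 0)
        = ∑ Ψ : ((Fin N × Fin t) ⊕ Fin s) → (Fin k → Fin n × Bool),
            (if (∀ b, ∃ r, Ψ (Sum.inl (b, r)) = T b) then ∏ x, w (Ψ x) else 0) := by
      apply Fintype.sum_equiv (Equiv.arrowCongr e (Equiv.refl (Fin k → Fin n × Bool)))
      intro Φ
      have hcond : G Φ ↔ (∀ b, ∃ r, (Equiv.arrowCongr e (Equiv.refl (Fin k → Fin n × Bool)) Φ) (Sum.inl (b, r)) = T b) := by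
        constructor <;> intro h b <;> obtain ⟨r, hr⟩ := h b <;> exact ⟨r, by simpa using hr⟩
      have hprod : formulaProbK n m k p Φ = ∏ x, w ((Equiv.arrowCongr e (Equiv.refl (Fin k → Fin n × Bool)) Φ) x) := by
        unfold formulaProbK
        rw [← hw]
        have := Equiv.prod_comp e.symm (fun j => w (Φ j))
        rw [← this]
        apply Finset.prod_congr rfl
        intro x _
        simp [Equiv.arrowCongr]
      by_cases h : G Φ
      · rw [if_pos h, if_pos (hcond.mp h), hprod]
      · rw [if_neg h, if_neg (fun hc => h (hcond.mpr hc))]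
    rw [e1]
    -- split sum over sum type
    have e2 : ∑ Ψ : ((Fin N × Fin t) ⊕ Fin s) → (Fin k → Fin n × Bool),
            (if (∀ b, ∃ r, Ψ (Sum.inl (b, r)) = T b) then ∏ x, w (Ψ x) else 0)
        = (∑ Ψl : Fin N × Fin t → (Fin k → Fin n × Bool),
            (if (∀ b, ∃ r, Ψl (b, r) = T b) then ∏ x, w (Ψl x) else 0))
          * ∑ Ψr : Fin s → (Fin k → Fin n × Bool), ∏ x, w (Ψr x) := by
      rw [← Equiv.sum_comp (Equiv.sumArrowEquivProdArrow _ _ (Fin k → Fin n × Bool)).symm, Fintype.sum_prod_type]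
      rw [Finset.sum_mul_sum]
      apply Finset.sum_congr rfl
      intro Ψl _
      apply Finset.sum_congr rfl
      intro Ψr _
      have hco : ∀ x, ((Equiv.sumArrowEquivProdArrow (Fin N × Fin t) (Fin s) (Fin k → Fin n × Bool)).symm (Ψl, Ψr)) x
          = Sum.elim Ψl Ψr x := fun x => rfl
      have hsplit : ∏ x, w (((Equiv.sumArrowEquivProdArrow (Fin N × Fin t) (Fin s) (Fin k → Fin n × Bool)).symm (Ψl, Ψr)) x)
          = (∏ x, w (Ψl x)) * ∏ x, w (Ψr x) := by
        rw [Finset.prod_congr rfl fun x _ => congrArg w (hco x), Fintype.prod_sum_type]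
        simp
      by_cases h : ∀ b, ∃ r, Ψl (b, r) = T b
      · rw [if_pos (by intro b; obtain ⟨r, hr⟩ := h b; exact ⟨r, by rw [hco]; simpa using hr⟩),
          if_pos h, hsplit]
      · rw [if_neg, if_neg h]
        · simp
        · intro hc
          apply h
          intro b
          obtain ⟨r, hr⟩ := hc b
          exact ⟨r, by rw [hco] at hr; simpa using hr⟩
    rw [e2]
    have e3 : ∑ Ψr : Fin s → (Fin k → Fin n × Bool), ∏ x, w (Ψr x) = 1 := by
      rw [sum_pi_prod (fun (_ : Fin s) c => w c), Finset.prod_congr rfl fun x _ => hsum]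
      simp
    rw [e3, mul_one]
    -- curry
    have e4 : ∑ Ψl : Fin N × Fin t → (Fin k → Fin n × Bool),
            (if (∀ b, ∃ r, Ψl (b, r) = T b) then ∏ x, w (Ψl x) else 0)
        = ∑ ψ : Fin N → Fin t → (Fin k → Fin n × Bool),
            (if (∀ b, ∃ r, ψ b r = T b) then ∏ b, ∏ r, w (ψ b r) else 0) := by
      apply Fintype.sum_equiv (Equiv.curry (Fin N) (Fin t) (Fin k → Fin n × Bool))
      intro Ψl
      have : ∏ x : Fin N × Fin t, w (Ψl x) = ∏ b, ∏ r, w (Ψl (b, r)) :=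
        Fintype.prod_prod_type _
      rw [this]
      rfl
    rw [e4, block_sum_eq N t w hsum T]
    rw [Finset.prod_congr rfl fun b _ => by rw [hwT b], Finset.prod_const, Finset.card_univ,
      Fintype.card_fin]
  rw [← step2]
  exact step1

lemma pow_one_sub_le (Q : ℝ) (hQ0 : 0 ≤ Q) (hQ1 : Q ≤ 1) (t : ℕ) :
    (1 - Q) ^ t ≤ Real.exp (-(Q * t)) := by
  have h1 : (1 - Q) ≤ Real.exp (-Q) := by
    have := Real.add_one_le_exp (-Q); linarith
  calc (1 - Q) ^ t ≤ (Real.exp (-Q)) ^ t := pow_le_pow_left₀ (by linarith) h1 t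
    _ = Real.exp (-(Q * t)) := by rw [← Real.exp_nat_mul]; congr 1; ring

lemma t_lower (m k : ℕ) : (m : ℝ) / 2 ^ k - 1 ≤ ((m / 2 ^ k : ℕ) : ℝ) := by
  have h2 : (0:ℕ) < 2 ^ k := Nat.pow_pos (by norm_num)
  have hdm := Nat.div_add_mod m (2 ^ k)
  have hc : ((2:ℝ) ^ k) * ((m / 2 ^ k : ℕ) : ℝ) + ((m % 2 ^ k : ℕ) : ℝ) = (m : ℝ) := by
    exact_mod_cast congrArg (Nat.cast : ℕ → ℝ) hdm
  have hc2 : ((m % 2 ^ k : ℕ) : ℝ) < (2:ℝ) ^ k := by exact_mod_cast Nat.mod_lt m h2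
  rw [sub_le_iff_le_add, div_le_iff₀ (by positivity)]
  nlinarith

lemma qmax_pos (n k : ℕ) (hkn : k ≤ n) (p : ℕ → ℝ) (hp : ∀ i, i < n → 0 < p i) :
    0 < qmaxK n k p := by
  unfold qmaxK
  apply div_pos
  · exact Finset.prod_pos fun j hj => hp j (lt_of_lt_of_le (Finset.mem_range.mp hj) hkn)
  · have := sigma_pos n k hkn p hp
    positivity

/-- For non-uniform random k-SAT with `q_max = o(1)`: (i) if `m = Θ(q_max⁻¹)` then the
formula is unsatisfiable with probability `Ω(1)`; (ii) if `m = ω(q_max⁻¹)` then it is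
unsatisfiable with probability `1 - o(1)`. -/
theorem nonuniform_kSAT_unsat_around_qmax
    (k : ℕ) (hk : 2 ≤ k) (p : ℕ → ℕ → ℝ) (hp : ProbEnsemble p)
    (hq : Tendsto (fun n => qmaxK n k (p n)) atTop (nhds 0)) :
    (∀ m : ℕ → ℕ,
      (fun n => (m n : ℝ)) =Θ[atTop] (fun n => (qmaxK n k (p n))⁻¹) →
      ∃ δ : ℝ, 0 < δ ∧ ∀ᶠ n in atTop, δ ≤ probUnsatK n (m n) k (p n)) ∧
    (∀ m : ℕ → ℕ,
      (fun n => (qmaxK n k (p n))⁻¹) =o[atTop] (fun n => (m n : ℝ)) →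
      Tendsto (fun n => probUnsatK n (m n) k (p n)) atTop (nhds 1)) := by
  have hfacpos : (0:ℝ) < (Nat.factorial k : ℝ) := by positivity
  have hfac1 : (1:ℝ) ≤ (Nat.factorial k : ℝ) := by
    exact_mod_cast Nat.one_le_iff_ne_zero.mpr (Nat.factorial_ne_zero k)
  have h2kpos : (0:ℝ) < (2:ℝ) ^ k := by positivity
  have hbasic : ∀ᶠ n in atTop, k ≤ n ∧ 1 ≤ n := by
    filter_upwards [eventually_ge_atTop k, eventually_ge_atTop 1] with n h1 h2
    exact ⟨h1, h2⟩
  constructor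
  · -- part (i) : m = Θ(1/qmax)
    intro m hTh
    obtain ⟨c, hc, hbig⟩ := hTh.2.exists_pos
    have hbound := hbig.bound
    set A : ℝ := 1 / (c * (Nat.factorial k) * 2 ^ k) with hA
    have hApos : 0 < A := by positivity
    have hexp1 : Real.exp (-(A/2)) < 1 := Real.exp_lt_one_iff.mpr (by linarith)
    have hexp0 : 0 < Real.exp (-(A/2)) := Real.exp_pos _
    refine ⟨(1 - Real.exp (-(A/2))) ^ (2 ^ k), pow_pos (by linarith) _, ?_⟩
    have hsmall : ∀ᶠ n in atTop,
        qmaxK n k (p n) < min 1 ((Nat.factorial k) * A / 2) :=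
      hq.eventually (gt_mem_nhds (lt_min one_pos (by positivity)))
    filter_upwards [hbasic, hsmall, hbound] with n hn hsm hb
    obtain ⟨hkn, hn1⟩ := hn
    have hppos : ∀ i, i < n → 0 < p n i := (hp n hn1).2.2
    have hqpos : 0 < qmaxK n k (p n) := qmax_pos n k hkn (p n) hppos
    set q : ℝ := qmaxK n k (p n) with hqdef
    set Q : ℝ := q / (Nat.factorial k) with hQdef
    set t : ℕ := m n / 2 ^ k with htdef
    have hq1 : q < 1 := lt_of_lt_of_le hsm (min_le_left _ _)
    have hQ0 : 0 ≤ Q := by positivity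
    have hQ1 : Q ≤ 1 := by
      rw [hQdef, div_le_one hfacpos]; linarith
    have hqm : 1 / c ≤ q * (m n : ℝ) := by
      rw [Real.norm_eq_abs, Real.norm_eq_abs, abs_of_pos (inv_pos.mpr hqpos),
        abs_of_nonneg (Nat.cast_nonneg _)] at hb
      rw [div_le_iff₀ hc]
      have h1 : q * q⁻¹ ≤ q * (c * (m n : ℝ)) :=
        mul_le_mul_of_nonneg_left hb hqpos.le
      rw [mul_inv_cancel₀ hqpos.ne'] at h1
      nlinarith
    have ht : (m n : ℝ) / 2 ^ k - 1 ≤ (t : ℝ) := t_lower (m n) k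
    have hQt : A / 2 ≤ Q * (t : ℝ) := by
      have s1 : Q * ((m n : ℝ) / 2 ^ k - 1) ≤ Q * (t : ℝ) :=
        mul_le_mul_of_nonneg_left ht hQ0
      have s2 : Q * ((m n : ℝ) / 2 ^ k - 1)
          = q * (m n : ℝ) / ((Nat.factorial k) * 2 ^ k) - q / (Nat.factorial k) := by
        rw [hQdef]; field_simp
      have s3 : A ≤ q * (m n : ℝ) / ((Nat.factorial k) * 2 ^ k) := by
        rw [hA, show (1:ℝ) / (c * (Nat.factorial k) * 2 ^ k)
            = (1 / c) / ((Nat.factorial k) * 2 ^ k) by field_simp]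
        gcongr
      have s4 : q / (Nat.factorial k) ≤ A / 2 := by
        rw [div_le_iff₀ hfacpos]
        have := lt_of_lt_of_le hsm (min_le_right _ _)
        nlinarith
      linarith
    have h1 : (1 - Q) ^ t ≤ Real.exp (-(Q * t)) := pow_one_sub_le Q hQ0 hQ1 t
    have h2 : Real.exp (-(Q * t)) ≤ Real.exp (-(A/2)) := Real.exp_le_exp.mpr (by linarith)
    have h3 : (1 - Real.exp (-(A/2))) ^ (2 ^ k) ≤ (1 - (1 - Q) ^ t) ^ (2 ^ k) :=
      pow_le_pow_left₀ (by linarith) (by linarith) _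
    exact h3.trans (unsat_lower n (m n) k hkn (p n) hppos)
  · -- part (ii) : m = ω(1/qmax)
    intro m ho
    have hTend : Tendsto (fun n => (qmaxK n k (p n) / (Nat.factorial k))
        * ((m n / 2 ^ k : ℕ) : ℝ)) atTop atTop := by
      rw [tendsto_atTop]
      intro b
      set B : ℝ := max b 0 + 1 with hB
      have hBpos : 0 < B := by
        have := le_max_right b 0; simp only [hB]; linarith
      have hBb : b ≤ B - 1 := by
        have := le_max_left b 0; simp only [hB]; linarith
      set ε : ℝ := 1 / (B * (Nat.factorial k) * 2 ^ k) with hε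
      have hεpos : 0 < ε := by positivity
      have hsm : ∀ᶠ n in atTop, qmaxK n k (p n) < min 1 ((Nat.factorial k : ℝ)) :=
        hq.eventually (gt_mem_nhds (lt_min one_pos hfacpos))
      filter_upwards [hbasic, hsm, ho.def hεpos] with n hn hsmn hbn
      obtain ⟨hkn, hn1⟩ := hn
      have hppos : ∀ i, i < n → 0 < p n i := (hp n hn1).2.2
      have hqpos : 0 < qmaxK n k (p n) := qmax_pos n k hkn (p n) hppos
      set q : ℝ := qmaxK n k (p n) with hqdef
      set Q : ℝ := q / (Nat.factorial k) with hQdef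
      set t : ℕ := m n / 2 ^ k with htdef
      have hQ0 : 0 ≤ Q := by positivity
      have hqm : 1 / ε ≤ q * (m n : ℝ) := by
        rw [Real.norm_eq_abs, Real.norm_eq_abs, abs_of_pos (inv_pos.mpr hqpos),
          abs_of_nonneg (Nat.cast_nonneg _)] at hbn
        rw [div_le_iff₀ hεpos]
        have h1 : q * q⁻¹ ≤ q * (ε * (m n : ℝ)) :=
          mul_le_mul_of_nonneg_left hbn hqpos.le
        rw [mul_inv_cancel₀ hqpos.ne'] at h1
        nlinarith
      have hinv : 1 / ε = B * (Nat.factorial k) * 2 ^ k := by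
        rw [hε]; field_simp
      have ht : (m n : ℝ) / 2 ^ k - 1 ≤ (t : ℝ) := t_lower (m n) k
      have s1 : Q * ((m n : ℝ) / 2 ^ k - 1) ≤ Q * (t : ℝ) :=
        mul_le_mul_of_nonneg_left ht hQ0
      have s2 : Q * ((m n : ℝ) / 2 ^ k - 1)
          = q * (m n : ℝ) / ((Nat.factorial k) * 2 ^ k) - q / (Nat.factorial k) := by
        rw [hQdef]; field_simp
      have s3 : B ≤ q * (m n : ℝ) / ((Nat.factorial k) * 2 ^ k) := by
        rw [le_div_iff₀ (by positivity)]
        rw [hinv] at hqm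
        nlinarith
      have s4 : q / (Nat.factorial k) ≤ 1 := by
        rw [div_le_one hfacpos]
        exact (lt_of_lt_of_le hsmn (min_le_right _ _)).le
      linarith
    have hg : Tendsto (fun n => (1 - Real.exp (-((qmaxK n k (p n) / (Nat.factorial k))
        * ((m n / 2 ^ k : ℕ) : ℝ)))) ^ (2 ^ k)) atTop (nhds 1) := by
      have h0 : Tendsto (fun n => Real.exp (-((qmaxK n k (p n) / (Nat.factorial k))
          * ((m n / 2 ^ k : ℕ) : ℝ)))) atTop (nhds 0) :=
        Real.tendsto_exp_neg_atTop_nhds_zero.comp hTend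
      have h1 : Tendsto (fun n => (1:ℝ) - Real.exp (-((qmaxK n k (p n) / (Nat.factorial k))
          * ((m n / 2 ^ k : ℕ) : ℝ)))) atTop (nhds 1) := by
        simpa using tendsto_const_nhds.sub h0
      simpa using h1.pow (2 ^ k)
    apply tendsto_of_tendsto_of_tendsto_of_le_of_le' hg tendsto_const_nhds
    · -- lower bound
      have hsm : ∀ᶠ n in atTop, qmaxK n k (p n) < 1 := hq.eventually (gt_mem_nhds one_pos)
      filter_upwards [hbasic, hsm] with n hn hq1
      obtain ⟨hkn, hn1⟩ := hn
      have hppos : ∀ i, i < n → 0 < p n i := (hp n hn1).2.2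
      have hqpos : 0 < qmaxK n k (p n) := qmax_pos n k hkn (p n) hppos
      set q : ℝ := qmaxK n k (p n) with hqdef
      set Q : ℝ := q / (Nat.factorial k) with hQdef
      set t : ℕ := m n / 2 ^ k with htdef
      have hQ0 : 0 ≤ Q := by positivity
      have hQ1 : Q ≤ 1 := by rw [hQdef, div_le_one hfacpos]; linarith
      have h1 : (1 - Q) ^ t ≤ Real.exp (-(Q * t)) := pow_one_sub_le Q hQ0 hQ1 t
      have hexple : Real.exp (-(Q * (t:ℝ))) ≤ 1 :=
        Real.exp_le_one_iff.mpr (neg_nonpos.mpr (by positivity))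
      have h3 : (1 - Real.exp (-(Q * (t:ℝ)))) ^ (2 ^ k) ≤ (1 - (1 - Q) ^ t) ^ (2 ^ k) :=
        pow_le_pow_left₀ (by linarith) (by linarith) _
      exact h3.trans (unsat_lower n (m n) k hkn (p n) hppos)
    · -- upper bound
      filter_upwards [hbasic] with n hn
      exact probUnsatK_le_one n (m n) k hn.1 (p n) ((hp n hn.2).2.2)
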